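/- The maximal order of an abelian subgroup of the symmetric group S_n, for n = 3k, is 3^k, and any abelian subgroup attaining this order is isomorphic to (Z/3)^k. -/

import Mathlib

lemma cube_lt_three_pow {m : ℕ} (hm : 4 ≤ m) : m ^ 3 < 3 ^ m := by
  induction m with
  | zero => omega
  | succ p ih =>
    rcases Nat.lt_or_ge p 4 with hp | hp
    · interval_cases p <;> simp_all
    · have h1 := ih (by omega)
      have h2 : (p + 1) ^ 3 ≤ 3 * p ^ 3 := by nlinarith [sq_nonneg p, hp]
      calc (p + 1) ^ 3 ≤ 3 * p ^ 3 := h2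
        _ < 3 * 3 ^ p := by omega
        _ = 3 ^ (p + 1) := by ring

lemma cube_le_three_pow (m : ℕ) : m ^ 3 ≤ 3 ^ m := by
  rcases Nat.lt_or_ge m 4 with hm | hm
  · interval_cases m <;> norm_num
  · exact (cube_lt_three_pow hm).le

lemma eq_three_of_cube_eq {m : ℕ} (h : m ^ 3 = 3 ^ m) : m = 3 := by
  rcases Nat.lt_or_ge m 4 with hm | hm
  · interval_cases m <;> omega
  · exact absurd h (cube_lt_three_pow hm).ne

lemma prod_le_three_pow {ι : Type*} [Fintype ι] (f : ι → ℕ) (k : ℕ)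
    (hsum : ∑ i, f i = 3 * k) : ∏ i, f i ≤ 3 ^ k := by
  have key : (∏ i, f i) ^ 3 ≤ (3 ^ k) ^ 3 := by
    calc (∏ i, f i) ^ 3 = ∏ i, (f i) ^ 3 := by rw [Finset.prod_pow]
      _ ≤ ∏ i, 3 ^ (f i) := Finset.prod_le_prod (fun _ _ => Nat.zero_le _)
          (fun i _ => cube_le_three_pow (f i))
      _ = 3 ^ (∑ i, f i) := by rw [Finset.prod_pow_eq_pow_sum]
      _ = (3 ^ k) ^ 3 := by rw [hsum, ← pow_mul, Nat.mul_comm]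
  exact (Nat.pow_le_pow_iff_left (by norm_num)).mp key

lemma nat_prod_eq_of_le {ι : Type*} (s : Finset ι) (f g : ι → ℕ)
    (hle : ∀ i ∈ s, f i ≤ g i) (hpos : ∀ i ∈ s, 0 < f i)
    (heq : ∏ i ∈ s, f i = ∏ i ∈ s, g i) : ∀ i ∈ s, f i = g i := by
  classical
  induction s using Finset.induction_on with
  | empty => intro i hi; simp at hi
  | insert _ _ ha =>
    rename_i a s ih
    rw [Finset.prod_insert ha, Finset.prod_insert ha] at heq
    have hfa : 0 < f a := hpos a (Finset.mem_insert_self a s)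
    have hfs : 0 < ∏ i ∈ s, f i :=
      Finset.prod_pos (fun i hi => hpos i (Finset.mem_insert_of_mem hi))
    have hlea : f a ≤ g a := hle a (Finset.mem_insert_self a s)
    have hles : ∏ i ∈ s, f i ≤ ∏ i ∈ s, g i :=
      Finset.prod_le_prod (fun _ _ => Nat.zero_le _)
        (fun i hi => hle i (Finset.mem_insert_of_mem hi))
    have h1 : f a = g a := by nlinarith
    have h2 : ∏ i ∈ s, f i = ∏ i ∈ s, g i := by nlinarith
    intro i hi
    rcases Finset.mem_insert.mp hi with rfl | hi
    · exact h1
    · exact ih (fun j hj => hle j (Finset.mem_insert_of_mem hj))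
        (fun j hj => hpos j (Finset.mem_insert_of_mem hj)) h2 i hi

lemma all_eq_three_of_prod_eq {ι : Type*} [Fintype ι] (f : ι → ℕ) (k : ℕ)
    (hpos : ∀ i, 0 < f i)
    (hsum : ∑ i, f i = 3 * k) (hprod : ∏ i, f i = 3 ^ k) (i : ι) : f i = 3 := by
  have key : ∏ j, (f j) ^ 3 = ∏ j, 3 ^ (f j) := by
    rw [Finset.prod_pow, hprod, ← pow_mul, Finset.prod_pow_eq_pow_sum, hsum, Nat.mul_comm]
  have := nat_prod_eq_of_le Finset.univ (fun j => f j ^ 3) (fun j => 3 ^ f j)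
    (fun j _ => cube_le_three_pow (f j)) (fun j _ => pow_pos (hpos j) 3) key i (Finset.mem_univ i)
  exact eq_three_of_cube_eq this

open MulAction Equiv

variable {n : ℕ} {M : Subgroup (Equiv.Perm (Fin n))}

lemma smul_comm'' (hc : ∀ a b : M, a * b = b * a) (g m : M) (x : Fin n) :
    g • m • x = m • g • x := by
  rw [smul_smul, smul_smul, hc]

lemma eq_on_orbit (hc : ∀ a b : M, a * b = b * a) {g h : M} {x y : Fin n}
    (hxy : y ∈ orbit M x) (hgx : g • x = h • x) : g • y = h • y := by
  obtain ⟨m, rfl⟩ := hxy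
  rw [smul_comm'' hc, hgx, smul_comm'' hc]

lemma fixes_of_fixes_mem (hc : ∀ a b : M, a * b = b * a) {g : M} {x y : Fin n}
    (hxy : y ∈ orbit M x) (hgy : g • y = y) : g • x = x := by
  have hx : x ∈ orbit M y := mem_orbit_symm.mp hxy
  have : g • y = (1 : M) • y := by simpa using hgy
  simpa using eq_on_orbit hc hx this

lemma pow_three_smul (hc : ∀ a b : M, a * b = b * a) {x : Fin n}
    (h3 : Nat.card (orbit M x) = 3) (g : M) : g • g • g • x = x := by
  have horbcard : (orbit M x).ncard = 3 := by
    rw [← Nat.card_coe_set_eq]; exact h3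
  have hfin : (orbit M x).Finite := Set.toFinite _
  by_cases h1 : g • x = x
  · rw [h1, h1, h1]
  have hxo : x ∈ orbit M x := mem_orbit_self x
  have hgxo : g • x ∈ orbit M x := mem_orbit x g
  have hg2x : g • g • x ∈ orbit M x := mapsTo_smul_orbit g x hgxo
  by_cases h2 : g • g • x = x
  · exfalso
    have hsub : ¬ (orbit M x ⊆ {x, g • x}) := by
      intro hsub
      have := Set.ncard_le_ncard hsub ((Set.finite_singleton _).insert _)
      have h2' : ({x, g • x} : Set (Fin n)).ncard ≤ 2 :=
        (Set.ncard_insert_le _ _).trans (by simp)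
      omega
    obtain ⟨y, hyo, hy⟩ := Set.not_subset.mp hsub
    simp only [Set.mem_insert_iff, Set.mem_singleton_iff, not_or] at hy
    obtain ⟨hyx, hygx⟩ := hy
    have hgyo : g • y ∈ orbit M x := mapsTo_smul_orbit g x hyo
    have hgygx : g • y ≠ g • x := fun h => hyx (MulAction.injective g h)
    have hgyx : g • y ≠ x := by
      intro h
      apply hygx
      have : g • y = g • (g • x) := by rw [h2, h]
      exact MulAction.injective g this
    have hset : ({x, g • x, y} : Set (Fin n)) = orbit M x := by
      apply Set.eq_of_subset_of_ncard_le
      · intro z hz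
        simp only [Set.mem_insert_iff, Set.mem_singleton_iff] at hz
        rcases hz with rfl | rfl | rfl
        · exact hxo
        · exact hgxo
        · exact hyo
      · rw [horbcard]
        have : ({x, g • x, y} : Set (Fin n)).ncard = 3 :=
          Set.ncard_eq_three.mpr ⟨x, g • x, y, Ne.symm h1, Ne.symm hyx, Ne.symm hygx, rfl⟩
        omega
      · exact hfin
    have hmem : g • y ∈ ({x, g • x, y} : Set (Fin n)) := hset ▸ hgyo
    simp only [Set.mem_insert_iff, Set.mem_singleton_iff] at hmem
    rcases hmem with h | h | h
    · exact hgyx h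
    · exact hgygx h
    · exact h1 (fixes_of_fixes_mem hc hyo h)
  · have hg3x : g • g • g • x ∈ orbit M x := mapsTo_smul_orbit g x hg2x
    have hne12 : g • g • x ≠ g • x := fun h => h1 (MulAction.injective g h)
    have hset : ({x, g • x, g • g • x} : Set (Fin n)) = orbit M x := by
      apply Set.eq_of_subset_of_ncard_le
      · intro z hz
        simp only [Set.mem_insert_iff, Set.mem_singleton_iff] at hz
        rcases hz with rfl | rfl | rfl
        · exact hxo
        · exact hgxo
        · exact hg2x
      · rw [horbcard]
        have : ({x, g • x, g • g • x} : Set (Fin n)).ncard = 3 :=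
          Set.ncard_eq_three.mpr ⟨x, g • x, g • g • x, Ne.symm h1, Ne.symm h2, Ne.symm hne12, rfl⟩
        omega
      · exact hfin
    have hmem : g • g • g • x ∈ ({x, g • x, g • g • x} : Set (Fin n)) := hset ▸ hg3x
    simp only [Set.mem_insert_iff, Set.mem_singleton_iff] at hmem
    rcases hmem with h | h | h
    · exact h
    · exact absurd (MulAction.injective g h) h2
    · exact absurd (MulAction.injective g (MulAction.injective g h)) h1

lemma card_le_and_orbits {k : ℕ} (hn : n = 3 * k) (hc : ∀ a b : M, a * b = b * a) :
    Nat.card M ≤ 3 ^ k ∧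
      (Nat.card M = 3 ^ k → ∀ x : Fin n, Nat.card (orbit M x) = 3) := by
  classical
  haveI : Finite (orbitRel.Quotient M (Fin n)) := Quotient.finite _
  letI : Fintype (orbitRel.Quotient M (Fin n)) := Fintype.ofFinite _
  set f : orbitRel.Quotient M (Fin n) → ℕ := fun ω => Nat.card ω.orbit with hf
  have hsum : ∑ ω, f ω = 3 * k := by
    have h1 : Nat.card (Fin n) = Nat.card (Σ ω : orbitRel.Quotient M (Fin n), ω.orbit) :=
      Nat.card_congr (selfEquivSigmaOrbits' M (Fin n))
    rw [Nat.card_eq_fintype_card, Nat.card_eq_fintype_card, Fintype.card_fin,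
      Fintype.card_sigma] at h1
    have h2 : ∑ ω, f ω = ∑ ω : orbitRel.Quotient M (Fin n), Fintype.card ω.orbit :=
      Finset.sum_congr rfl fun ω _ => by simp [hf, Nat.card_eq_fintype_card]
    rw [h2, ← h1]
    exact hn
  have hpos : ∀ ω : orbitRel.Quotient M (Fin n), 0 < f ω := by
    intro ω
    have : Nonempty ω.orbit := (orbitRel.Quotient.nonempty_orbit ω).to_subtype
    exact Nat.card_pos
  have hmem : ∀ (g : M) (ω : orbitRel.Quotient M (Fin n)), g • ω.out ∈ ω.orbit := by
    intro g ω
    rw [orbitRel.Quotient.orbit_eq_orbit_out ω Quotient.out_eq']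
    exact mem_orbit _ g
  have hinj : Function.Injective
      (fun (g : M) => fun ω : orbitRel.Quotient M (Fin n) => (⟨g • ω.out, hmem g ω⟩ : ω.orbit)) := by
    intro g h hgh
    have key : ∀ x : Fin n, g • x = h • x := by
      intro x
      have hx : x ∈ orbit M ((Quotient.mk'' x : orbitRel.Quotient M (Fin n)).out) := by
        rw [← orbitRel.Quotient.orbit_eq_orbit_out _ Quotient.out_eq']
        exact orbitRel.Quotient.mem_orbit.mpr rfl
      have h0 : g • (Quotient.mk'' x : orbitRel.Quotient M (Fin n)).out
          = h • (Quotient.mk'' x : orbitRel.Quotient M (Fin n)).out :=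
        congrArg Subtype.val (congrFun hgh (Quotient.mk'' x))
      exact eq_on_orbit hc hx h0
    exact Subtype.ext (Equiv.ext key)
  have hle : Nat.card M ≤ ∏ ω, f ω := by
    have := Nat.card_le_card_of_injective _ hinj
    rwa [Nat.card_pi] at this
  have hub : ∏ ω, f ω ≤ 3 ^ k := prod_le_three_pow f k hsum
  refine ⟨hle.trans hub, fun hcard x => ?_⟩
  have hprod : ∏ ω, f ω = 3 ^ k := le_antisymm hub (hcard ▸ hle)
  have hall := all_eq_three_of_prod_eq f k hpos hsum hprod (Quotient.mk'' x)
  rw [hf] at hall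
  simpa [orbitRel.Quotient.orbit_mk] using hall

lemma exists_max_subgroup (k n : ℕ) (hn : n = 3 * k) :
    ∃ M : Subgroup (Equiv.Perm (Fin n)), (∀ a b : M, a * b = b * a) ∧ Nat.card M = 3 ^ k := by
  have e : Fin n ≃ Fin k × ZMod 3 := Fintype.equivOfCardEq (by simp [hn, mul_comm])
  let π : (Fin k → ZMod 3) → Equiv.Perm (Fin k × ZMod 3) := fun f =>
    { toFun := fun p => (p.1, p.2 + f p.1)
      invFun := fun p => (p.1, p.2 - f p.1)
      left_inv := fun p => by simp
      right_inv := fun p => by simp }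
  let φ : Multiplicative (Fin k → ZMod 3) →* Equiv.Perm (Fin n) :=
    { toFun := fun f => (e.trans (π f.toAdd)).trans e.symm
      map_one' := by
        ext x
        simp [π]
      map_mul' := by
        intro f g
        ext x
        simp [π, Equiv.Perm.mul_apply, add_assoc]
        ring_nf }
  have hinj : Function.Injective φ := by
    intro f g hfg
    have key : ∀ i : Fin k, f.toAdd i = g.toAdd i := by
      intro i
      have := congrArg (fun σ : Equiv.Perm (Fin n) => e (σ (e.symm (i, 0)))) hfg
      simpa [φ, π] using this
    exact funext key
  refine ⟨φ.range, ?_, ?_⟩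
  · rintro ⟨a, f, rfl⟩ ⟨b, g, rfl⟩
    refine Subtype.ext ?_
    show φ f * φ g = φ g * φ f
    rw [← map_mul, ← map_mul, mul_comm]
  · have h1 : Nat.card φ.range = Nat.card (Multiplicative (Fin k → ZMod 3)) := by
      exact (Nat.card_congr (Equiv.setCongr (MonoidHom.coe_range φ))).trans
        (Nat.card_congr (Equiv.ofInjective φ hinj).symm)
    rw [h1]
    simp [Nat.card_eq_fintype_card]

lemma iso_part {k n : ℕ} (hn : n = 3 * k) (M : Subgroup (Equiv.Perm (Fin n)))
    (hc : ∀ a b : M, a * b = b * a) (hcard : Nat.card M = 3 ^ k) :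
    Nonempty (M ≃* (Fin k → Multiplicative (ZMod 3))) := by
  have horb : ∀ x : Fin n, Nat.card (orbit M x) = 3 := (card_le_and_orbits hn hc).2 hcard
  have hcube : ∀ g : M, g ^ 3 = 1 := by
    intro g
    have hperm : (g : Equiv.Perm (Fin n)) ^ 3 = 1 := by
      refine Equiv.ext fun x => ?_
      have h := pow_three_smul hc (horb x) g
      simpa [Submonoid.smul_def, Subgroup.smul_def, Equiv.Perm.smul_def, pow_succ, Equiv.Perm.mul_apply] using h
    exact Subtype.ext (by rw [SubmonoidClass.coe_pow, OneMemClass.coe_one]; exact hperm)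
  letI : CommGroup M := { (inferInstance : Group M) with mul_comm := hc }
  have h3 : ∀ x : Additive M, (3 : ℕ) • x = 0 := by
    intro x
    apply Additive.toMul.injective
    rw [toMul_nsmul]
    exact hcube _
  letI : Module (ZMod 3) (Additive M) := AddCommGroup.zmodModule h3
  haveI : Module.Finite (ZMod 3) (Additive M) := Module.Finite.of_finite
  letI : Fintype (Additive M) := Fintype.ofFinite _
  have hdim : Module.finrank (ZMod 3) (Additive M) = k := by
    have hcard2 : Fintype.card (Additive M) = 3 ^ Module.finrank (ZMod 3) (Additive M) := by
      have h := Module.card_eq_pow_finrank (K := ZMod 3) (V := Additive M)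
      simpa [ZMod.card] using h
    have heq : (3 : ℕ) ^ Module.finrank (ZMod 3) (Additive M) = 3 ^ k := by
      rw [← hcard2, ← Nat.card_eq_fintype_card]
      rw [Nat.card_congr (Additive.toMul (α := M))]
      exact hcard
    exact Nat.pow_right_injective (by norm_num) heq
  let b := Module.finBasis (ZMod 3) (Additive M)
  let e2 : Additive M ≃ₗ[ZMod 3] (Fin k → ZMod 3) := (b.reindex (finCongr hdim)).equivFun
  exact ⟨(MulEquiv.multiplicativeAdditive M).symm.trans
    ((AddEquiv.toMultiplicative e2.toAddEquiv).trans (MulEquiv.funMultiplicative _ _))⟩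

/-- For `n = 3k`, the maximal order of an abelian subgroup of `S_n` is `3^k`,
and any abelian subgroup attaining this order is isomorphic to `(ℤ/3)^k`. -/
theorem maximal_abelian_symmetric_three_k (k n : ℕ) (hn : n = 3 * k) :
    IsGreatest {m : ℕ | ∃ M : Subgroup (Equiv.Perm (Fin n)),
        (∀ a b : M, a * b = b * a) ∧ Nat.card M = m} (3 ^ k) ∧
    ∀ M : Subgroup (Equiv.Perm (Fin n)), (∀ a b : M, a * b = b * a) →
      Nat.card M = 3 ^ k →
      Nonempty (M ≃* (Fin k → Multiplicative (ZMod 3))) := by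
  obtain ⟨M₀, h1, h2⟩ := exists_max_subgroup k n hn
  refine ⟨⟨⟨M₀, h1, h2⟩, ?_⟩, fun M hc hcard => iso_part hn M hc hcard⟩
  rintro m ⟨M, hc, rfl⟩
  exact (card_le_and_orbits hn hc).1
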